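/- Let J : ℝ^d → ℝ be C¹ with ∇J L-Lipschitz and satisfy ‖∇J(θ)‖² ≤ H(J(θ) − J*). Let μ ∈ [0,1), v, z ∈ ℝ^d and θ = z − (μ/(1−μ))v. Then J(θ) − J* ≤ (1 + H/2)(J(z) − J*) + (μ²(1+L)/(2(1−μ)²))‖v‖². -/

import Mathlib

open InnerProductSpace intervalIntegral

lemma descent {d : ℕ} (J : EuclideanSpace ℝ (Fin d) → ℝ) (L : NNReal)
    (hJ : ContDiff ℝ 1 J) (hL : LipschitzWith L (gradient J)) (x y : EuclideanSpace ℝ (Fin d)) :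
    J y ≤ J x + inner ℝ (gradient J x) (y - x) + L / 2 * ‖y - x‖ ^ 2 := by
  have hdiff : Differentiable ℝ J := hJ.differentiable one_ne_zero
  set w := y - x with hw
  have hfd : ∀ p, fderiv ℝ J p w = (inner ℝ (gradient J p) w : ℝ) := by
    intro p
    rw [gradient, ← InnerProductSpace.toDual_apply_apply]
    simp
  have hder : ∀ t : ℝ, HasDerivAt (fun t : ℝ => J (x + t • w))
      ((inner ℝ (gradient J (x + t • w)) w : ℝ)) t := by
    intro t
    have h1 : HasDerivAt (fun t : ℝ => x + t • w) w t := by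
      simpa using ((hasDerivAt_id t).smul_const w).const_add x
    have h2 := (hdiff (x + t • w)).hasFDerivAt.comp_hasDerivAt t h1
    rw [hfd] at h2; exact h2
  have hcont : Continuous fun t : ℝ => (inner ℝ (gradient J (x + t • w)) w : ℝ) := by
    exact (continuous_inner.comp (((hL.continuous.comp (by continuity))).prodMk continuous_const))
  have hint : J (x + (1:ℝ) • w) - J (x + (0:ℝ) • w)
      = ∫ t in (0:ℝ)..1, (inner ℝ (gradient J (x + t • w)) w : ℝ) :=
    (intervalIntegral.integral_eq_sub_of_hasDerivAt (fun t _ => hder t)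
      (hcont.intervalIntegrable 0 1)).symm
  have hbound : ∀ t ∈ Set.Icc (0:ℝ) 1,
      (inner ℝ (gradient J (x + t • w)) w : ℝ) ≤ (inner ℝ (gradient J x) w : ℝ) + L * t * ‖w‖ ^ 2 := by
    intro t ht
    have h1 : (inner ℝ (gradient J (x + t • w)) w : ℝ) - (inner ℝ (gradient J x) w : ℝ)
        = (inner ℝ (gradient J (x + t • w) - gradient J x) w : ℝ) := by
      rw [inner_sub_left]
    have h2 : (inner ℝ (gradient J (x + t • w) - gradient J x) w : ℝ)
        ≤ ‖gradient J (x + t • w) - gradient J x‖ * ‖w‖ := real_inner_le_norm _ _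
    have h3 : ‖gradient J (x + t • w) - gradient J x‖ ≤ L * (t * ‖w‖) := by
      have := hL.dist_le_mul (x + t • w) x
      simp only [dist_eq_norm] at this
      calc ‖gradient J (x + t • w) - gradient J x‖ ≤ L * ‖x + t • w - x‖ := this
        _ = L * (|t| * ‖w‖) := by rw [add_sub_cancel_left, norm_smul]; simp
        _ = L * (t * ‖w‖) := by rw [abs_of_nonneg ht.1]
    nlinarith [norm_nonneg w, mul_le_mul_of_nonneg_right h3 (norm_nonneg w)]
  have hcont2 : Continuous fun t : ℝ => (inner ℝ (gradient J x) w : ℝ) + (L:ℝ) * t * ‖w‖ ^ 2 :=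
    continuous_const.add ((continuous_const.mul continuous_id).mul continuous_const)
  have hintle : (∫ t in (0:ℝ)..1, (inner ℝ (gradient J (x + t • w)) w : ℝ))
      ≤ ∫ t in (0:ℝ)..1, ((inner ℝ (gradient J x) w : ℝ) + L * t * ‖w‖ ^ 2) :=
    intervalIntegral.integral_mono_on (by norm_num) (hcont.intervalIntegrable 0 1)
      (hcont2.intervalIntegrable 0 1) hbound
  have hval : (∫ t in (0:ℝ)..1, ((inner ℝ (gradient J x) w : ℝ) + L * t * ‖w‖ ^ 2))
      = (inner ℝ (gradient J x) w : ℝ) + L / 2 * ‖w‖ ^ 2 := by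
    rw [intervalIntegral.integral_add (intervalIntegrable_const)
        (Continuous.intervalIntegrable (by fun_prop) 0 1)]
    simp [intervalIntegral.integral_const_mul, mul_comm, integral_id]
    left; ring
  have : x + (1:ℝ) • w = y := by rw [hw]; abel_nf; simp
  have h0 : x + (0:ℝ) • w = x := by simp
  rw [this, h0] at hint
  linarith [hint ▸ le_trans (le_of_eq hint) (hintle.trans (le_of_eq hval))]

theorem stmt17 {d : ℕ} (J : EuclideanSpace ℝ (Fin d) → ℝ) (L : NNReal) (Jstar H : ℝ)
    (hJ : ContDiff ℝ 1 J) (hL : LipschitzWith L (gradient J))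
    (hJ1 : ∀ x, ‖gradient J x‖ ^ 2 ≤ H * (J x - Jstar))
    (hmin : ∀ x, Jstar ≤ J x)
    (μ : ℝ) (hμ : μ ∈ Set.Ico (0 : ℝ) 1)
    (v z θ : EuclideanSpace ℝ (Fin d)) (hθ : θ = z - (μ / (1 - μ)) • v) :
    J θ - Jstar ≤ (1 + H / 2) * (J z - Jstar)
      + (μ ^ 2 * (1 + L) / (2 * (1 - μ) ^ 2)) * ‖v‖ ^ 2 := by
  obtain ⟨hμ0, hμ1⟩ := hμ
  have h1μ : (0:ℝ) < 1 - μ := by linarith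
  have hc : 0 ≤ μ / (1 - μ) := div_nonneg hμ0 h1μ.le
  have hN : ‖θ - z‖ ^ 2 = μ ^ 2 / (1 - μ) ^ 2 * ‖v‖ ^ 2 := by
    have he : θ - z = -((μ / (1 - μ)) • v) := by rw [hθ]; abel
    rw [he, norm_neg, norm_smul, Real.norm_eq_abs, abs_of_nonneg hc, mul_pow, div_pow]
  have hdes := descent J L hJ hL z θ
  have hin : (inner ℝ (gradient J z) (θ - z) : ℝ) ≤ ‖gradient J z‖ * ‖θ - z‖ :=
    real_inner_le_norm _ _
  have hy : ‖gradient J z‖ * ‖θ - z‖ ≤ ‖gradient J z‖ ^ 2 / 2 + ‖θ - z‖ ^ 2 / 2 := by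
    nlinarith [sq_nonneg (‖gradient J z‖ - ‖θ - z‖)]
  have hg := hJ1 z
  have hrhs : (μ ^ 2 * (1 + L) / (2 * (1 - μ) ^ 2)) * ‖v‖ ^ 2
      = (1 + L) / 2 * (μ ^ 2 / (1 - μ) ^ 2 * ‖v‖ ^ 2) := by
    field_simp
  rw [hrhs, ← hN]
  linarith
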